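/- arXiv:1506.03165 — 3 statements merged into one kernel-verified Lean document; each statement's English description precedes it below -/
import Mathlib

section
/- Let R be a commutative ring, f a nonzerodivisor, (φ, ψ) an m×m matrix factorization of f, and M = coker(φ), N = coker(ψ). Then there is an exact sequence of R/(f)-modules 0 → N → (R/(f))^m → M → 0, where the surjection is induced by the quotient R^m → M. -/
open Matrix

/-- For an `m × m` matrix factorization `(φ, ψ)` of a nonzerodivisor `f`, with
`M = coker φ` and `N = coker ψ`, there is a short exact sequence
`0 → N → (R/(f))^m → M → 0`, where `(R/(f))^m` is realized as `R^m / f·R^m` and the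
surjection is induced by the quotient map `R^m → M`.  (All the modules involved are
annihilated by `f`, hence are `R/(f)`-modules, and the `R`-linear maps between them are
automatically `R/(f)`-linear.) -/
theorem syzygy_ses_of_matrixFactorization {R : Type*} [CommRing R] {m : ℕ}
    (f : R) (hf : f ∈ nonZeroDivisors R) (φ ψ : Matrix (Fin m) (Fin m) R)
    (h1 : φ * ψ = f • (1 : Matrix (Fin m) (Fin m) R))
    (h2 : ψ * φ = f • (1 : Matrix (Fin m) (Fin m) R)) :
    ∃ (α : ((Fin m → R) ⧸ LinearMap.range ψ.mulVecLin) →ₗ[R]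
        ((Fin m → R) ⧸ LinearMap.range (f • (LinearMap.id : (Fin m → R) →ₗ[R] (Fin m → R)))))
      (g : ((Fin m → R) ⧸ LinearMap.range (f • (LinearMap.id : (Fin m → R) →ₗ[R] (Fin m → R))))
        →ₗ[R] ((Fin m → R) ⧸ LinearMap.range φ.mulVecLin)),
      Function.Injective α ∧ Function.Surjective g ∧
      LinearMap.range α = LinearMap.ker g ∧
      ∀ v : Fin m → R, g (Submodule.Quotient.mk v) = Submodule.Quotient.mk v := by
  set Nψ := LinearMap.range ψ.mulVecLin with hNψ
  set F := LinearMap.range (f • (LinearMap.id : (Fin m → R) →ₗ[R] (Fin m → R))) with hF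
  set Mφ := LinearMap.range φ.mulVecLin with hMφ
  have hφψ : ∀ v : Fin m → R, φ.mulVec (ψ.mulVec v) = f • v := by
    intro v
    have := congrArg (fun A : Matrix (Fin m) (Fin m) R => A.mulVec v) h1
    simpa [Matrix.mulVec_mulVec, Matrix.smul_mulVec, Matrix.one_mulVec] using this
  have hψφ : ∀ v : Fin m → R, ψ.mulVec (φ.mulVec v) = f • v := by
    intro v
    have := congrArg (fun A : Matrix (Fin m) (Fin m) R => A.mulVec v) h2
    simpa [Matrix.mulVec_mulVec, Matrix.smul_mulVec, Matrix.one_mulVec] using this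
  have hmemF : ∀ v : Fin m → R, f • v ∈ F := by
    intro v
    exact ⟨v, rfl⟩
  have h1le : Nψ ≤ Submodule.comap φ.mulVecLin F := by
    rintro x ⟨v, rfl⟩
    simp only [Submodule.mem_comap, Matrix.mulVecLin_apply]
    rw [hφψ]
    exact hmemF v
  have h2le : F ≤ Submodule.comap (LinearMap.id : (Fin m → R) →ₗ[R] (Fin m → R)) Mφ := by
    rintro x ⟨v, rfl⟩
    refine ⟨ψ.mulVec v, ?_⟩
    simp [Matrix.mulVecLin_apply, hφψ v]
  refine ⟨Submodule.mapQ Nψ F φ.mulVecLin h1le,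
    Submodule.mapQ F Mφ LinearMap.id h2le, ?_, ?_, ?_, ?_⟩
  · -- injectivity
    rw [← LinearMap.ker_eq_bot, eq_bot_iff]
    rintro x hx
    obtain ⟨v, rfl⟩ := Submodule.Quotient.mk_surjective _ x
    rw [LinearMap.mem_ker, Submodule.mapQ_apply, Submodule.Quotient.mk_eq_zero] at hx
    obtain ⟨w, hw⟩ := hx
    simp only [LinearMap.smul_apply, LinearMap.id_apply, Matrix.mulVecLin_apply] at hw
    have hfv : f • v = f • ψ.mulVec w := by
      rw [← hψφ v, ← hw]
      simp [Matrix.mulVec_smul]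
    have hv : v = ψ.mulVec w := by
      funext i
      have : f * v i = f * ψ.mulVec w i := congrFun hfv i
      exact (mul_cancel_left_mem_nonZeroDivisors hf).mp this
    simp only [Submodule.mem_bot, Submodule.Quotient.mk_eq_zero, hv]
    exact ⟨w, rfl⟩
  · -- surjectivity
    intro y
    obtain ⟨v, rfl⟩ := Submodule.Quotient.mk_surjective _ y
    exact ⟨Submodule.Quotient.mk v, by rw [Submodule.mapQ_apply, LinearMap.id_apply]⟩
  · -- exactness
    ext x
    obtain ⟨v, rfl⟩ := Submodule.Quotient.mk_surjective _ x
    constructor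
    · rintro ⟨y, hy⟩
      obtain ⟨u, rfl⟩ := Submodule.Quotient.mk_surjective _ y
      rw [Submodule.mapQ_apply, Submodule.Quotient.eq] at hy
      rw [LinearMap.mem_ker, Submodule.mapQ_apply, LinearMap.id_apply,
        Submodule.Quotient.mk_eq_zero]
      have hvm : φ.mulVecLin u - v ∈ Mφ := h2le hy
      have : φ.mulVecLin u ∈ Mφ := ⟨u, rfl⟩
      simpa using Mφ.sub_mem this hvm
    · intro hx
      rw [LinearMap.mem_ker, Submodule.mapQ_apply, LinearMap.id_apply,
        Submodule.Quotient.mk_eq_zero] at hx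
      obtain ⟨u, hu⟩ := hx
      refine ⟨Submodule.Quotient.mk u, ?_⟩
      rw [Submodule.mapQ_apply, hu]
  · intro v
    rw [Submodule.mapQ_apply, LinearMap.id_apply]
end

section
/- Let 0 → M₁ → M₂ → M₃ → 0 be a short exact sequence of finite free modules over a commutative ring R in which M₃ is also free (so the sequence splits). Then for each k there is an exact sequence 0 → Λ^k M₁ → Λ^k M₂ whose cokernel admits a filtration with graded pieces Λ^i M₁ ⊗ Λ^(k-i) M₃ for 0 ≤ i < k. -/
open ExteriorAlgebra TensorProduct

variable {R M N : Type*} [CommRing R] [AddCommGroup M] [Module R M] [AddCommGroup N] [Module R N]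

theorem extPowerMap_mem (k : ℕ) (f : M →ₗ[R] N) :
    ∀ x ∈ ⋀[R]^k M, ExteriorAlgebra.map f x ∈ ⋀[R]^k N := by
  intro x hx
  have h : Submodule.map (ExteriorAlgebra.map f).toLinearMap (⋀[R]^k M) ≤ ⋀[R]^k N := by
    rw [← ιMulti_span_fixedDegree, ← ιMulti_span_fixedDegree, Submodule.map_span]
    refine Submodule.span_mono ?_
    rintro _ ⟨_, ⟨v, rfl⟩, rfl⟩
    exact ⟨f ∘ v, (ExteriorAlgebra.map_apply_ιMulti f v).symm⟩
  exact h ⟨x, hx, rfl⟩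

/-- The map `⋀^k M → ⋀^k N` on `k`-th exterior powers induced by a linear map
`f : M → N`. -/
noncomputable def extPowerMap (k : ℕ) (f : M →ₗ[R] N) : (⋀[R]^k M) →ₗ[R] (⋀[R]^k N) :=
  (ExteriorAlgebra.map f).toLinearMap.restrict (extPowerMap_mem k f)


open ExteriorAlgebra TensorProduct

namespace ExtFiltAux

variable {R M₁ M₂ M₃ : Type*} [CommRing R]
    [AddCommGroup M₁] [Module R M₁] [AddCommGroup M₂] [Module R M₂]
    [AddCommGroup M₃] [Module R M₃]

variable (f : M₁ →ₗ[R] M₂) (s : M₃ →ₗ[R] M₂)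

noncomputable def psi : ExteriorAlgebra R M₁ ⊗[R] ExteriorAlgebra R M₃ →ₗ[R] ExteriorAlgebra R M₂ :=
  TensorProduct.lift (LinearMap.mk₂ R (fun x y => map f x * map s y)
    (fun x x' y => by rw [map_add, add_mul])
    (fun c x y => by rw [map_smul, smul_mul_assoc])
    (fun x y y' => by rw [map_add, mul_add])
    (fun c x y => by rw [map_smul, mul_smul_comm]))

@[simp] lemma psi_tmul (x : ExteriorAlgebra R M₁) (y : ExteriorAlgebra R M₃) :
    psi f s (x ⊗ₜ y) = map f x * map s y := rfl

/-- The isometry of (zero) quadratic forms underlying `f.coprod s`. -/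
def ee : QuadraticMap.Isometry ((0 : QuadraticForm R M₁).prod (0 : QuadraticForm R M₃))
    (0 : QuadraticForm R M₂) :=
  ⟨f.coprod s, fun m => by simp⟩

lemma psi_eq : psi f s =
    (CliffordAlgebra.map (ee f s)).toLinearMap ∘ₗ
      (CliffordAlgebra.toProd 0 0).toLinearMap ∘ₗ
      (GradedTensorProduct.of R (CliffordAlgebra.evenOdd (0 : QuadraticForm R M₁))
        (CliffordAlgebra.evenOdd (0 : QuadraticForm R M₃))).toLinearMap := by
  apply TensorProduct.ext'
  intro x y
  have h1 : (GradedTensorProduct.of R (CliffordAlgebra.evenOdd (0 : QuadraticForm R M₁))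
      (CliffordAlgebra.evenOdd (0 : QuadraticForm R M₃))) (x ⊗ₜ y) = x ᵍ⊗ₜ y := rfl
  simp only [LinearMap.comp_apply, LinearEquiv.coe_coe, h1, AlgHom.toLinearMap_apply]
  rw [CliffordAlgebra.toProd, GradedTensorProduct.lift_tmul, map_mul]
  rw [← AlgHom.comp_apply, ← AlgHom.comp_apply, CliffordAlgebra.map_comp_map,
    CliffordAlgebra.map_comp_map]
  have h2 : CliffordAlgebra.map ((ee f s).comp (QuadraticMap.Isometry.inl _ _)) =
      ExteriorAlgebra.map f := by
    unfold ExteriorAlgebra.map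
    congr 1
    refine DFunLike.ext _ _ fun v => ?_
    show (f.coprod s) (v, 0) = f v
    simp
  have h3 : CliffordAlgebra.map ((ee f s).comp (QuadraticMap.Isometry.inr _ _)) =
      ExteriorAlgebra.map s := by
    unfold ExteriorAlgebra.map
    congr 1
    refine DFunLike.ext _ _ fun v => ?_
    show (f.coprod s) (0, v) = s v
    simp
  rw [h2, h3, psi_tmul]

lemma psi_bijective (hco : Function.Bijective (f.coprod s)) :
    Function.Bijective (psi f s) := by
  rw [psi_eq]
  have hof : Function.Bijective (GradedTensorProduct.of R
      (CliffordAlgebra.evenOdd (0 : QuadraticForm R M₁))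
      (CliffordAlgebra.evenOdd (0 : QuadraticForm R M₃))).toLinearMap :=
    (GradedTensorProduct.of R _ _).bijective
  have hto : Function.Bijective (CliffordAlgebra.toProd (0 : QuadraticForm R M₁)
      (0 : QuadraticForm R M₃)) := by
    constructor
    · intro a b hab
      have := AlgHom.congr_fun (CliffordAlgebra.ofProd_comp_toProd (0 : QuadraticForm R M₁)
        (0 : QuadraticForm R M₃))
      calc a = CliffordAlgebra.ofProd 0 0 (CliffordAlgebra.toProd 0 0 a) := (this a).symm
        _ = CliffordAlgebra.ofProd 0 0 (CliffordAlgebra.toProd 0 0 b) := by rw [hab]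
        _ = b := this b
    · intro c
      exact ⟨CliffordAlgebra.ofProd 0 0 c,
        AlgHom.congr_fun (CliffordAlgebra.toProd_comp_ofProd (0 : QuadraticForm R M₁)
          (0 : QuadraticForm R M₃)) c⟩
  have hmap : Function.Bijective (CliffordAlgebra.map (ee f s)) := by
    set E := LinearEquiv.ofBijective (f.coprod s) hco with hE
    have hE' : ∀ m, (f.coprod s) (E.symm m) = m := fun m => E.apply_symm_apply m
    set ee' : QuadraticMap.Isometry (0 : QuadraticForm R M₂)
        ((0 : QuadraticForm R M₁).prod (0 : QuadraticForm R M₃)) :=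
      ⟨E.symm.toLinearMap, fun m => by simp⟩ with hee'
    have h1 : (ee' ).comp (ee f s) = QuadraticMap.Isometry.id _ := by
      refine DFunLike.ext _ _ fun v => ?_
      show E.symm ((f.coprod s) v) = v
      exact E.symm_apply_apply v
    have h2 : (ee f s).comp ee' = QuadraticMap.Isometry.id _ := by
      refine DFunLike.ext _ _ fun v => ?_
      show (f.coprod s) (E.symm v) = v
      exact hE' v
    constructor
    · intro a b hab
      have h3 := AlgHom.congr_fun (by rw [CliffordAlgebra.map_comp_map, h1,
        CliffordAlgebra.map_id] : (CliffordAlgebra.map ee').comp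
          (CliffordAlgebra.map (ee f s)) = AlgHom.id R _)
      calc a = CliffordAlgebra.map ee' (CliffordAlgebra.map (ee f s) a) := (h3 a).symm
        _ = CliffordAlgebra.map ee' (CliffordAlgebra.map (ee f s) b) := by rw [hab]
        _ = b := h3 b
    · intro c
      have h3 := AlgHom.congr_fun (by rw [CliffordAlgebra.map_comp_map, h2,
        CliffordAlgebra.map_id] : (CliffordAlgebra.map (ee f s)).comp
          (CliffordAlgebra.map ee') = AlgHom.id R _)
      exact ⟨CliffordAlgebra.map ee' c, h3 c⟩
  exact hmap.comp (hto.comp hof)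

end ExtFiltAux
section part2
set_option maxHeartbeats 1000000
set_option synthInstance.maxHeartbeats 200000
open DirectSum
namespace ExtFiltAux

variable {R M₁ M₂ M₃ : Type*} [CommRing R]
    [AddCommGroup M₁] [Module R M₁] [AddCommGroup M₂] [Module R M₂]
    [AddCommGroup M₃] [Module R M₃]

variable (f : M₁ →ₗ[R] M₂) (s : M₃ →ₗ[R] M₂)

lemma psi_mem {i j : ℕ} (x : ExteriorAlgebra R M₁) (y : ExteriorAlgebra R M₃)
    (hx : x ∈ ⋀[R]^i M₁) (hy : y ∈ ⋀[R]^j M₃) :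
    psi f s (x ⊗ₜ y) ∈ ⋀[R]^(i + j) M₂ := by
  rw [psi_tmul]
  have h1 : map f x ∈ ⋀[R]^i M₂ := extPowerMap_mem i f x hx
  have h2 : map s y ∈ ⋀[R]^j M₂ := extPowerMap_mem j s y hy
  show _ ∈ LinearMap.range (ι R : M₂ →ₗ[R] ExteriorAlgebra R M₂) ^ (i + j)
  rw [pow_add]
  exact Submodule.mul_mem_mul h1 h2

/-- The map `⋀^i M₁ ⊗ ⋀^(k-i) M₃ → ⋀^k M₂`. -/
noncomputable def phi (k : ℕ) (i : Fin (k + 1)) :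
    ((⋀[R]^(i : ℕ) M₁) ⊗[R] (⋀[R]^(k - (i : ℕ)) M₃)) →ₗ[R] (⋀[R]^k M₂) :=
  LinearMap.codRestrict _
    (psi f s ∘ₗ TensorProduct.map (Submodule.subtype _) (Submodule.subtype _))
    (fun u => by
      induction u using TensorProduct.induction_on with
      | zero => rw [map_zero]; exact Submodule.zero_mem _
      | tmul x y =>
        have h := psi_mem f s (x : ExteriorAlgebra R M₁) (y : ExteriorAlgebra R M₃) x.2 y.2
        have hik : (i : ℕ) + (k - (i : ℕ)) = k := by
          have := i.isLt; omega
        rw [hik] at h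
        exact h
      | add a b ha hb => rw [map_add]; exact Submodule.add_mem _ ha hb)

lemma phi_coe (k : ℕ) (i : Fin (k + 1)) (u : (⋀[R]^(i : ℕ) M₁) ⊗[R] (⋀[R]^(k - (i : ℕ)) M₃)) :
    (phi f s k i u : ExteriorAlgebra R M₂) =
      psi f s (TensorProduct.map (Submodule.subtype _) (Submodule.subtype _) u) := rfl

variable (hco : Function.Bijective (f.coprod s))

/-- The assembled bigraded decomposition of `Λ M₂`. -/
noncomputable def theta :
    (⨁ p : ℕ × ℕ, ((⋀[R]^p.1 M₁) ⊗[R] (⋀[R]^p.2 M₃))) ≃ₗ[R] ExteriorAlgebra R M₂ :=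
  ((TensorProduct.directSum R R (fun i : ℕ => (⋀[R]^i M₁ : Type _))
      (fun j : ℕ => (⋀[R]^j M₃ : Type _))).symm ≪≫ₗ
    (TensorProduct.congr
      (DirectSum.decomposeLinearEquiv (fun i : ℕ => ⋀[R]^i M₁)).symm
      (DirectSum.decomposeLinearEquiv (fun j : ℕ => ⋀[R]^j M₃)).symm)) ≪≫ₗ
    LinearEquiv.ofBijective (psi f s) (psi_bijective f s hco)

lemma theta_lof (i j : ℕ) (x : ⋀[R]^i M₁) (y : ⋀[R]^j M₃) :
    theta f s hco (DirectSum.lof R (ℕ × ℕ)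
        (fun p => (⋀[R]^p.1 M₁) ⊗[R] (⋀[R]^p.2 M₃)) (i, j) (x ⊗ₜ y)) =
      psi f s ((x : ExteriorAlgebra R M₁) ⊗ₜ (y : ExteriorAlgebra R M₃)) := by
  rw [theta]
  simp only [LinearEquiv.trans_apply]
  have hds := TensorProduct.directSum_symm_lof_tmul (R := R) (S := R)
    (M₁ := fun i : ℕ => (⋀[R]^i M₁ : Type _)) (M₂ := fun j : ℕ => (⋀[R]^j M₃ : Type _)) i x j y
  rw [hds]
  rw [TensorProduct.congr_tmul]
  have hA := LinearMap.congr_fun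
    (DirectSum.decomposeLinearEquiv_symm_comp_lof (ℳ := fun i : ℕ => ⋀[R]^i M₁) i) x
  have hB := LinearMap.congr_fun
    (DirectSum.decomposeLinearEquiv_symm_comp_lof (ℳ := fun j : ℕ => ⋀[R]^j M₃) j) y
  simp only [LinearMap.comp_apply, LinearEquiv.coe_coe] at hA hB
  rw [hA, hB]
  rfl

lemma theta_symm_phi (k : ℕ) (i : Fin (k + 1))
    (u : (⋀[R]^(i : ℕ) M₁) ⊗[R] (⋀[R]^(k - (i : ℕ)) M₃)) :
    (theta f s hco).symm (phi f s k i u : ExteriorAlgebra R M₂) =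
      DirectSum.lof R (ℕ × ℕ)
        (fun p => (⋀[R]^p.1 M₁) ⊗[R] (⋀[R]^p.2 M₃)) ((i : ℕ), k - (i : ℕ)) u := by
  rw [LinearEquiv.symm_apply_eq]
  induction u using TensorProduct.induction_on with
  | zero => simp
  | tmul x y => rw [theta_lof]; rfl
  | add a b ha hb => simp only [map_add, Submodule.coe_add, ha, hb]

/-- Projection onto the `(i, k-i)` component. -/
noncomputable def proj (k : ℕ) (i : Fin (k + 1)) :
    (⋀[R]^k M₂) →ₗ[R] ((⋀[R]^(i : ℕ) M₁) ⊗[R] (⋀[R]^(k - (i : ℕ)) M₃)) :=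
  (DirectSum.component R (ℕ × ℕ) (fun p => (⋀[R]^p.1 M₁) ⊗[R] (⋀[R]^p.2 M₃))
      ((i : ℕ), k - (i : ℕ))) ∘ₗ
    (theta f s hco).symm.toLinearMap ∘ₗ (Submodule.subtype _)

lemma proj_phi_same (k : ℕ) (i : Fin (k + 1))
    (u : (⋀[R]^(i : ℕ) M₁) ⊗[R] (⋀[R]^(k - (i : ℕ)) M₃)) :
    proj f s hco k i (phi f s k i u) = u := by
  rw [proj]
  simp only [LinearMap.comp_apply, LinearEquiv.coe_coe, Submodule.coe_subtype]
  rw [theta_symm_phi, DirectSum.component.lof_self]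

lemma proj_phi_ne (k : ℕ) (i j : Fin (k + 1)) (hne : j ≠ i)
    (u : (⋀[R]^(j : ℕ) M₁) ⊗[R] (⋀[R]^(k - (j : ℕ)) M₃)) :
    proj f s hco k i (phi f s k j u) = 0 := by
  rw [proj]
  simp only [LinearMap.comp_apply, LinearEquiv.coe_coe, Submodule.coe_subtype]
  rw [theta_symm_phi]
  have hne2 : ((j : ℕ), k - (j : ℕ)) ≠ ((i : ℕ), k - (i : ℕ)) := by
    intro h
    exact hne (Fin.val_injective (by simpa using congrArg Prod.fst h))
  classical
  rw [DirectSum.component.of, dif_neg hne2]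

end ExtFiltAux
end part2
section part3
set_option maxHeartbeats 1000000
set_option synthInstance.maxHeartbeats 200000
open DirectSum
namespace ExtFiltAux

variable {R M₁ M₂ M₃ : Type*} [CommRing R]
    [AddCommGroup M₁] [Module R M₁] [AddCommGroup M₂] [Module R M₂]
    [AddCommGroup M₃] [Module R M₃]

variable (f : M₁ →ₗ[R] M₂) (s : M₃ →ₗ[R] M₂)
variable (hco : Function.Bijective (f.coprod s))

include hco in
lemma phi_injective (k : ℕ) (i : Fin (k + 1)) : Function.Injective (phi f s k i) := by
  have h : Function.LeftInverse (proj f s hco k i) (phi f s k i) :=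
    fun u => proj_phi_same f s hco k i u
  exact h.injective

/-- The degree-`k` projection of the exterior algebra. -/
noncomputable def prk (k : ℕ) : ExteriorAlgebra R M₂ →ₗ[R] (⋀[R]^k M₂) :=
  (DirectSum.component R ℕ (fun n => (⋀[R]^n M₂ : Submodule R (ExteriorAlgebra R M₂))) k) ∘ₗ
    (DirectSum.decomposeLinearEquiv (fun n : ℕ => ⋀[R]^n M₂)).toLinearMap

lemma prk_coe (k : ℕ) (z : ⋀[R]^k M₂) : prk (R := R) k (z : ExteriorAlgebra R M₂) = z := by
  rw [prk]
  simp only [LinearMap.comp_apply, LinearEquiv.coe_coe,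
    DirectSum.decomposeLinearEquiv_apply]
  rw [DirectSum.decompose_coe, ← DirectSum.lof_eq_of R, DirectSum.component.lof_self]

lemma prk_coe_mem {k m : ℕ} (hmk : m ≠ k) (z : ExteriorAlgebra R M₂) (hz : z ∈ ⋀[R]^m M₂) :
    prk (R := R) k z = 0 := by
  rw [prk]
  simp only [LinearMap.comp_apply, LinearEquiv.coe_coe,
    DirectSum.decomposeLinearEquiv_apply]
  rw [show z = ((⟨z, hz⟩ : ⋀[R]^m M₂) : ExteriorAlgebra R M₂) from rfl]
  rw [DirectSum.decompose_coe, ← DirectSum.lof_eq_of R, DirectSum.component.of, dif_neg hmk]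

include hco in
lemma sup_range (k : ℕ) :
    (⨆ i : Fin (k + 1), LinearMap.range (phi f s k i)) = ⊤ := by
  rw [eq_top_iff]
  rintro z -
  have hz : (z : ExteriorAlgebra R M₂) =
      theta f s hco ((theta f s hco).symm (z : ExteriorAlgebra R M₂)) :=
    (LinearEquiv.apply_symm_apply _ _).symm
  have key : ∀ w : ⨁ p : ℕ × ℕ, ((⋀[R]^p.1 M₁) ⊗[R] (⋀[R]^p.2 M₃)),
      prk (R := R) k (theta f s hco w) ∈ ⨆ i : Fin (k + 1), LinearMap.range (phi f s k i) := by
    intro w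
    induction w using DirectSum.induction_on with
    | zero => rw [map_zero, map_zero]; exact Submodule.zero_mem _
    | of p u =>
      obtain ⟨i, j⟩ := p
      induction u using TensorProduct.induction_on with
      | zero => rw [map_zero, map_zero, map_zero]; exact Submodule.zero_mem _
      | add a b ha hb => rw [map_add, map_add, map_add]; exact Submodule.add_mem _ ha hb
      | tmul x y =>
        rw [← DirectSum.lof_eq_of R, theta_lof]
        by_cases hij : i + j = k
        · have hik : (i : ℕ) ≤ k := by omega
          have hmem : psi f s ((x : ExteriorAlgebra R M₁) ⊗ₜ (y : ExteriorAlgebra R M₃))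
              ∈ ⋀[R]^k M₂ := by
            have := psi_mem f s (x : ExteriorAlgebra R M₁) (y : ExteriorAlgebra R M₃) x.2 y.2
            rwa [hij] at this
          have hcoe : prk (R := R) k (psi f s ((x : ExteriorAlgebra R M₁) ⊗ₜ y)) =
              ⟨psi f s ((x : ExteriorAlgebra R M₁) ⊗ₜ y), hmem⟩ := prk_coe k ⟨_, hmem⟩
          rw [hcoe]
          have hyj : (y : ExteriorAlgebra R M₃) ∈ ⋀[R]^(k - i) M₃ := by
            have : j = k - i := by omega
            rw [← this]; exact y.2
          have : (⟨psi f s ((x : ExteriorAlgebra R M₁) ⊗ₜ y), hmem⟩ : ⋀[R]^k M₂) =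
              phi f s k ⟨i, by omega⟩ (x ⊗ₜ ⟨(y : ExteriorAlgebra R M₃), hyj⟩) :=
            Subtype.ext rfl
          rw [this]
          exact Submodule.mem_iSup_of_mem ⟨i, by omega⟩ (LinearMap.mem_range_self _ _)
        · rw [prk_coe_mem (R := R) hij _ (psi_mem f s _ _ x.2 y.2)]
          exact Submodule.zero_mem _
    | add a b ha hb => rw [map_add, map_add]; exact Submodule.add_mem _ ha hb
  have hz2 : z = prk (R := R) k (theta f s hco ((theta f s hco).symm
      (z : ExteriorAlgebra R M₂))) := by
    rw [← hz, prk_coe]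
  rw [hz2]
  exact key _

include hco in
lemma range_disj (k : ℕ) (a : Fin (k + 1)) (T : Submodule R (⋀[R]^k M₂))
    (hT : T ≤ ⨆ t : Fin (k + 1), ⨆ _ : t ≠ a, LinearMap.range (phi f s k t)) :
    LinearMap.range (phi f s k a) ⊓ T = ⊥ := by
  rw [eq_bot_iff]
  rintro x ⟨⟨u, rfl⟩, hxT⟩
  have h1 : proj f s hco k a (phi f s k a u) = u := proj_phi_same f s hco k a u
  have h2 : proj f s hco k a (phi f s k a u) ∈
      Submodule.map (proj f s hco k a)
        (⨆ t : Fin (k + 1), ⨆ _ : t ≠ a, LinearMap.range (phi f s k t)) :=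
    ⟨_, hT hxT, rfl⟩
  rw [Submodule.map_iSup] at h2
  have h3 : (⨆ t : Fin (k + 1), Submodule.map (proj f s hco k a)
      (⨆ _ : t ≠ a, LinearMap.range (phi f s k t))) = ⊥ := by
    rw [eq_bot_iff]
    refine iSup_le fun t => ?_
    rw [Submodule.map_iSup]
    refine iSup_le fun htne => ?_
    rintro _ ⟨_, ⟨v, rfl⟩, rfl⟩
    rw [proj_phi_ne f s hco k a t htne v]
    exact Submodule.zero_mem _
  rw [h3, Submodule.mem_bot] at h2
  rw [h2] at h1
  rw [← h1, map_zero, Submodule.mem_bot]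

/-- General lemma: produce the subquotient equivalence. -/
theorem quot_piece {V P : Type*} [AddCommGroup V] [Module R V] [AddCommMonoid P] [Module R P]
    (A B : Submodule R V) (ψ : P →ₗ[R] V) (hinj : Function.Injective ψ)
    (hd : LinearMap.range ψ ⊓ A = ⊥) (hs : LinearMap.range ψ ⊔ A = B) :
    Nonempty ((B ⧸ A.comap B.subtype) ≃ₗ[R] P) := by
  have hrB : ∀ u, ψ u ∈ B := fun u => by
    have : ψ u ∈ LinearMap.range ψ ⊔ A := Submodule.mem_sup_left (LinearMap.mem_range_self _ u)
    rwa [hs] at this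
  set χ : P →ₗ[R] B ⧸ A.comap B.subtype :=
    (A.comap B.subtype).mkQ ∘ₗ ψ.codRestrict B hrB with hχ
  have hχinj : Function.Injective χ := by
    intro u v huv
    rw [hχ, LinearMap.comp_apply, LinearMap.comp_apply, Submodule.mkQ_apply,
      Submodule.mkQ_apply, Submodule.Quotient.eq] at huv
    have h1 : ψ u - ψ v ∈ A := huv
    have h2 : ψ u - ψ v ∈ LinearMap.range ψ :=
      sub_mem (LinearMap.mem_range_self _ u) (LinearMap.mem_range_self _ v)
    have h3 : ψ u - ψ v ∈ LinearMap.range ψ ⊓ A := ⟨h2, h1⟩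
    rw [hd, Submodule.mem_bot, sub_eq_zero] at h3
    exact hinj h3
  have hχsurj : Function.Surjective χ := by
    intro q
    obtain ⟨b, rfl⟩ := Submodule.mkQ_surjective _ q
    have hb2 : (b : V) ∈ LinearMap.range ψ ⊔ A := by rw [hs]; exact b.2
    obtain ⟨y, hy, a, ha, hba⟩ := Submodule.mem_sup.mp hb2
    obtain ⟨u, rfl⟩ := hy
    refine ⟨u, ?_⟩
    rw [hχ, LinearMap.comp_apply, Submodule.mkQ_apply, Submodule.mkQ_apply,
      Submodule.Quotient.eq]
    show B.subtype (ψ.codRestrict B hrB u - b) ∈ A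
    have h5 : B.subtype (ψ.codRestrict B hrB u - b) = ψ u - b := rfl
    have h6 : ψ u - (b : V) = -a := by rw [← hba]; abel
    rw [h5, h6]
    exact Submodule.neg_mem _ ha
  exact ⟨(LinearEquiv.ofBijective χ ⟨hχinj, hχsurj⟩).symm⟩

end ExtFiltAux
end part3
section part4
set_option maxHeartbeats 1600000
set_option synthInstance.maxHeartbeats 400000
open DirectSum
namespace ExtFiltAux

variable {R M₁ M₂ M₃ : Type*} [CommRing R]
    [AddCommGroup M₁] [Module R M₁] [AddCommGroup M₂] [Module R M₂]
    [AddCommGroup M₃] [Module R M₃]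

variable (f : M₁ →ₗ[R] M₂) (s : M₃ →ₗ[R] M₂)

lemma map_mkQ_inf {V : Type*} [AddCommGroup V] [Module R V] (p Y Z : Submodule R V)
    (h : Y ⊓ (Z ⊔ p) = ⊥) :
    Submodule.map p.mkQ Y ⊓ Submodule.map p.mkQ Z = ⊥ := by
  rw [eq_bot_iff]
  rintro x ⟨⟨y, hy, hxy⟩, ⟨z, hz, hxz⟩⟩
  have hyz : y - z ∈ p := by
    rw [← Submodule.ker_mkQ p, LinearMap.mem_ker, map_sub, hxy, hxz, sub_self]
  have hy2 : y ∈ Y ⊓ (Z ⊔ p) :=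
    ⟨hy, Submodule.mem_sup.mpr ⟨z, hz, y - z, hyz, by abel⟩⟩
  rw [h, Submodule.mem_bot] at hy2
  rw [Submodule.mem_bot, ← hxy, hy2, map_zero]

lemma range_last (k : ℕ) :
    LinearMap.range (extPowerMap k f) = LinearMap.range (phi f s k (Fin.last k)) := by
  have hone : (1 : ExteriorAlgebra R M₃) ∈ ⋀[R]^(k - ((Fin.last k : ℕ))) M₃ := by
    show (1 : ExteriorAlgebra R M₃) ∈
      LinearMap.range (ι R : M₃ →ₗ[R] ExteriorAlgebra R M₃) ^ (k - k)
    rw [Nat.sub_self, pow_zero]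
    exact Submodule.one_le.mp le_rfl
  apply le_antisymm
  · rintro _ ⟨x, rfl⟩
    refine ⟨x ⊗ₜ ⟨1, hone⟩, ?_⟩
    apply Subtype.ext
    show psi f s ((x : ExteriorAlgebra R M₁) ⊗ₜ (1 : ExteriorAlgebra R M₃)) =
      map f (x : ExteriorAlgebra R M₁)
    rw [psi_tmul, map_one, mul_one]
  · rintro _ ⟨u, rfl⟩
    induction u using TensorProduct.induction_on with
    | zero => rw [map_zero]; exact Submodule.zero_mem _
    | add a b ha hb => rw [map_add]; exact Submodule.add_mem _ ha hb
    | tmul x y =>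
      have hy : (y : ExteriorAlgebra R M₃) ∈ (1 : Submodule R (ExteriorAlgebra R M₃)) := by
        have h2 : (y : ExteriorAlgebra R M₃) ∈
            LinearMap.range (ι R : M₃ →ₗ[R] ExteriorAlgebra R M₃) ^ (k - k) := y.2
        rw [Nat.sub_self, pow_zero] at h2
        exact h2
      obtain ⟨r, hr⟩ := Submodule.mem_one.mp hy
      refine ⟨r • x, ?_⟩
      apply Subtype.ext
      show map f ((r • x : ⋀[R]^k M₁) : ExteriorAlgebra R M₁) =
        psi f s ((x : ExteriorAlgebra R M₁) ⊗ₜ (y : ExteriorAlgebra R M₃))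
      rw [psi_tmul, ← hr]
      have h3 : (map s : ExteriorAlgebra R M₃ →ₐ[R] ExteriorAlgebra R M₂)
          (algebraMap R _ r) = algebraMap R _ r := AlgHom.commutes _ r
      rw [h3]
      rw [show ((r • x : ⋀[R]^k M₁) : ExteriorAlgebra R M₁)
        = r • (x : ExteriorAlgebra R M₁) from rfl]
      rw [map_smul]
      rw [← Algebra.commutes r (map f (x : ExteriorAlgebra R M₁)), ← Algebra.smul_def]

lemma ext_inj (hco : Function.Bijective (f.coprod s)) (k : ℕ) :
    Function.Injective (extPowerMap k f) := by
  rw [← LinearMap.ker_eq_bot, eq_bot_iff]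
  intro x hx
  rw [LinearMap.mem_ker] at hx
  have hc : map f (x : ExteriorAlgebra R M₁) = 0 := congrArg Subtype.val hx
  have h1 : psi f s ((x : ExteriorAlgebra R M₁) ⊗ₜ (1 : ExteriorAlgebra R M₃)) = 0 := by
    rw [psi_tmul, map_one, mul_one, hc]
  have h2 : (x : ExteriorAlgebra R M₁) ⊗ₜ (1 : ExteriorAlgebra R M₃) =
      (0 : ExteriorAlgebra R M₁ ⊗[R] ExteriorAlgebra R M₃) :=
    (psi_bijective f s hco).1 (by rw [h1, map_zero])
  have h3 := congrArg ((TensorProduct.rid R (ExteriorAlgebra R M₁)).toLinearMap ∘ₗ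
      TensorProduct.map LinearMap.id (algebraMapInv
        (M := M₃)).toLinearMap) h2
  simp only [LinearMap.comp_apply, TensorProduct.map_tmul, LinearMap.id_apply,
    AlgHom.toLinearMap_apply, map_one, map_zero, LinearEquiv.coe_coe,
    TensorProduct.rid_tmul, one_smul] at h3
  rw [Submodule.mem_bot]
  exact Subtype.ext h3

end ExtFiltAux
end part4
set_option maxHeartbeats 1600000
set_option synthInstance.maxHeartbeats 400000

open ExtFiltAux in
/-- Given a short exact sequence `0 → M₁ → M₂ → M₃ → 0` of finite free modules over a
commutative ring (with `M₃` free, so the sequence splits), for each `k` the induced map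
`⋀^k M₁ → ⋀^k M₂` is injective and its cokernel admits a filtration
`⊥ = W 0 ≤ W 1 ≤ ⋯ ≤ W k = ⊤` whose graded pieces are
`⋀^i M₁ ⊗ ⋀^(k-i) M₃` for `0 ≤ i < k`. -/
theorem exteriorPower_filtration_of_ses {R M₁ M₂ M₃ : Type*} [CommRing R]
    [AddCommGroup M₁] [Module R M₁] [AddCommGroup M₂] [Module R M₂]
    [AddCommGroup M₃] [Module R M₃]
    [Module.Free R M₁] [Module.Finite R M₁] [Module.Free R M₂] [Module.Finite R M₂]
    [Module.Free R M₃] [Module.Finite R M₃]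
    (f : M₁ →ₗ[R] M₂) (g : M₂ →ₗ[R] M₃)
    (hf : Function.Injective f) (hg : Function.Surjective g)
    (hfg : LinearMap.range f = LinearMap.ker g) (k : ℕ) :
    Function.Injective (extPowerMap k f) ∧
      ∃ W : Fin (k + 1) → Submodule R
          ((⋀[R]^k M₂) ⧸ LinearMap.range (extPowerMap k f)),
        Monotone W ∧ W 0 = ⊥ ∧ W (Fin.last k) = ⊤ ∧
        ∀ i : Fin k,
          Nonempty (((W i.succ) ⧸ Submodule.comap (W i.succ).subtype (W i.castSucc)) ≃ₗ[R]
            ((⋀[R]^(i : ℕ) M₁) ⊗[R] (⋀[R]^(k - (i : ℕ)) M₃))) := by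
  classical
  -- the splitting
  obtain ⟨s, hgs⟩ : ∃ s : M₃ →ₗ[R] M₂, g ∘ₗ s = LinearMap.id :=
    Module.projective_lifting_property g LinearMap.id hg
  have hgs' : ∀ m, g (s m) = m := fun m => LinearMap.congr_fun hgs m
  have hco : Function.Bijective (f.coprod s) := by
    constructor
    · have key : ∀ z : M₁ × M₃, f.coprod s z = 0 → z = 0 := by
        rintro ⟨a₁, a₃⟩ h
        have h0 : f a₁ + s a₃ = 0 := h
        have hg0 : g (f a₁) = 0 := by
          have : f a₁ ∈ LinearMap.ker g := hfg ▸ LinearMap.mem_range_self f a₁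
          exact this
        have h3 : a₃ = 0 := by
          have h4 := congrArg g h0
          rw [map_add, hg0, zero_add, map_zero, hgs'] at h4
          exact h4
        have h1 : f a₁ = 0 := by rwa [h3, map_zero, add_zero] at h0
        have h5 : a₁ = 0 := hf (by rw [h1, map_zero])
        rw [h5, h3]; rfl
      intro a b hab
      have := key (a - b) (by rw [map_sub, hab, sub_self])
      exact sub_eq_zero.mp this
    · intro m
      have hm : m - s (g m) ∈ LinearMap.ker g := by
        rw [LinearMap.mem_ker, map_sub, hgs', sub_self]
      rw [← hfg] at hm
      obtain ⟨x, hx⟩ := hm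
      refine ⟨(x, g m), ?_⟩
      show f x + s (g m) = m
      rw [hx]; abel
  refine ⟨ext_inj f s hco k, ?_⟩
  set p : Submodule R (⋀[R]^k M₂) := LinearMap.range (extPowerMap k f) with hpdef
  have hp : p = LinearMap.range (phi f s k (Fin.last k)) := range_last f s k
  set N : Fin (k + 1) → Submodule R (⋀[R]^k M₂) :=
    fun t => LinearMap.range (phi f s k t) with hN
  set S : Fin (k + 1) → Submodule R (⋀[R]^k M₂) :=
    fun j => ⨆ t : Fin (k + 1), ⨆ _ : (t : ℕ) < (j : ℕ), N t with hS
  refine ⟨fun j => Submodule.map p.mkQ (S j), ?_, ?_, ?_, ?_⟩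
  · -- Monotone
    intro j j' hjj'
    apply Submodule.map_mono
    apply iSup_mono
    intro t
    apply iSup_le
    intro ht
    exact le_iSup (fun _ : (t : ℕ) < (j' : ℕ) => N t) (lt_of_lt_of_le ht hjj')
  · -- W 0 = ⊥
    show Submodule.map p.mkQ (S 0) = ⊥
    have h0 : S 0 = ⊥ := by
      rw [hS]
      simp
    rw [h0, Submodule.map_bot]
  · -- W last = ⊤
    show Submodule.map p.mkQ (S (Fin.last k)) = ⊤
    have hsup : S (Fin.last k) ⊔ N (Fin.last k) = ⊤ := by
      refine le_antisymm le_top ?_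
      rw [← sup_range f s hco k]
      refine iSup_le fun t => ?_
      by_cases ht : (t : ℕ) < k
      · exact le_sup_of_le_left (le_iSup₂ (f := fun t _ => N t) t ht)
      · have hte : t = Fin.last k := by
          have := t.isLt
          apply Fin.ext
          show (t : ℕ) = k
          omega
        rw [hte]
        exact le_sup_right
    have h2 : Submodule.map p.mkQ (N (Fin.last k)) = ⊥ := by
      rw [eq_bot_iff]
      rintro _ ⟨y, hy, rfl⟩
      rw [Submodule.mem_bot, Submodule.mkQ_apply, Submodule.Quotient.mk_eq_zero]
      rw [hp]
      exact hy
    have h3 : Submodule.map p.mkQ ⊤ = ⊤ := by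
      rw [Submodule.map_top, Submodule.range_mkQ]
    calc Submodule.map p.mkQ (S (Fin.last k))
        = Submodule.map p.mkQ (S (Fin.last k)) ⊔ Submodule.map p.mkQ (N (Fin.last k)) := by
          rw [h2, sup_bot_eq]
      _ = Submodule.map p.mkQ (S (Fin.last k) ⊔ N (Fin.last k)) :=
          (Submodule.map_sup _ _ _).symm
      _ = ⊤ := by rw [hsup, h3]
  · -- graded pieces
    intro i
    have hlast_ne : Fin.last k ≠ i.castSucc := by
      intro h
      have := congrArg Fin.val h
      simp only [Fin.val_last, Fin.coe_castSucc] at this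
      have := i.isLt
      omega
    have hSle : S i.castSucc ⊔ p ≤
        ⨆ t : Fin (k + 1), ⨆ _ : t ≠ i.castSucc, N t := by
      refine sup_le ?_ ?_
      · refine iSup_le fun t => iSup_le fun ht => ?_
        refine le_iSup₂ (f := fun t _ => N t) t ?_
        intro heq
        rw [heq] at ht
        exact lt_irrefl _ ht
      · rw [hp]
        exact le_iSup₂ (f := fun t _ => N t) (Fin.last k) hlast_ne
    have hd' : N i.castSucc ⊓ (S i.castSucc ⊔ p) = ⊥ :=
      range_disj f s hco k i.castSucc _ hSle
    have hNlast_disj : N i.castSucc ⊓ N (Fin.last k) = ⊥ :=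
      range_disj f s hco k i.castSucc _ (le_iSup₂ (f := fun t _ => N t) (Fin.last k) hlast_ne)
    set ψ : ((⋀[R]^((i.castSucc : Fin (k+1)) : ℕ) M₁) ⊗[R]
        (⋀[R]^(k - ((i.castSucc : Fin (k+1)) : ℕ)) M₃)) →ₗ[R]
        ((⋀[R]^k M₂) ⧸ p) := p.mkQ ∘ₗ phi f s k i.castSucc with hψ
    have hker : LinearMap.ker ψ = ⊥ := by
      rw [eq_bot_iff]
      intro u hu
      rw [LinearMap.mem_ker, hψ, LinearMap.comp_apply, Submodule.mkQ_apply,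
        Submodule.Quotient.mk_eq_zero] at hu
      rw [hp] at hu
      have hmem : phi f s k i.castSucc u ∈ N i.castSucc ⊓ N (Fin.last k) :=
        ⟨LinearMap.mem_range_self _ u, hu⟩
      rw [hNlast_disj, Submodule.mem_bot] at hmem
      have := phi_injective f s hco k i.castSucc (by rw [hmem, map_zero] :
        phi f s k i.castSucc u = phi f s k i.castSucc 0)
      rw [Submodule.mem_bot, this]
    have hinj : Function.Injective ψ := by
      intro u v huv
      have : u - v ∈ LinearMap.ker ψ := by rw [LinearMap.mem_ker, map_sub, huv, sub_self]
      rw [hker, Submodule.mem_bot, sub_eq_zero] at this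
      exact this
    have hrange : LinearMap.range ψ = Submodule.map p.mkQ (N i.castSucc) := by
      rw [hψ, LinearMap.range_comp]
    have hd : LinearMap.range ψ ⊓ Submodule.map p.mkQ (S i.castSucc) = ⊥ := by
      rw [hrange]
      exact map_mkQ_inf p _ _ hd'
    have hNS : N i.castSucc ⊔ S i.castSucc = S i.succ := by
      apply le_antisymm
      · refine sup_le ?_ ?_
        · refine le_iSup₂ (f := fun t _ => N t) i.castSucc ?_
          show ((i.castSucc : Fin (k+1)) : ℕ) < ((i.succ : Fin (k+1)) : ℕ)
          simp
        · refine iSup_le fun t => iSup_le fun ht => ?_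
          refine le_iSup₂ (f := fun t _ => N t) t ?_
          have h1 : (t : ℕ) < (i : ℕ) := ht
          show (t : ℕ) < ((i.succ : Fin (k+1)) : ℕ)
          simp only [Fin.val_succ]
          omega
      · refine iSup_le fun t => iSup_le fun ht => ?_
        have h1 : (t : ℕ) < (i : ℕ) + 1 := by simpa using ht
        rcases Nat.lt_succ_iff_lt_or_eq.mp h1 with h | h
        · exact le_sup_of_le_right (le_iSup₂ (f := fun t _ => N t) t h)
        · have : t = i.castSucc := Fin.ext (by simpa using h)
          rw [this]
          exact le_sup_left
    have hs : LinearMap.range ψ ⊔ Submodule.map p.mkQ (S i.castSucc) =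
        Submodule.map p.mkQ (S i.succ) := by
      rw [hrange, ← Submodule.map_sup, hNS]
    beta_reduce
    exact quot_piece (Submodule.map p.mkQ (S i.castSucc)) (Submodule.map p.mkQ (S i.succ))
      ψ hinj hd hs
end

section
/- Let R be a commutative ring, f a nonzerodivisor, and let φ : R^m → R^m be an injective R-linear map with coker(φ) annihilated by f. Then for every k ≥ 1, the cokernel of Λ^k φ : Λ^k R^m → Λ^k R^m is annihilated by f^k. -/
open ExteriorAlgebra

variable {R M N : Type*} [CommRing R] [AddCommGroup M] [Module R M] [AddCommGroup N] [Module R N]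

/-- If `φ : R^m → R^m` is an injective linear map whose cokernel is annihilated by a
nonzerodivisor `f`, then for every `k ≥ 1` the cokernel of `⋀^k φ` is annihilated by
`f^k`. -/
theorem coker_exteriorPower_annihilated {R : Type*} [CommRing R] {m : ℕ}
    (f : R) (hf : f ∈ nonZeroDivisors R)
    (φ : (Fin m → R) →ₗ[R] (Fin m → R)) (hφ : Function.Injective φ)
    (hcoker : ∀ x : (Fin m → R) ⧸ LinearMap.range φ, f • x = 0)
    (k : ℕ) (hk : 1 ≤ k) :
    ∀ y : (⋀[R]^k (Fin m → R)) ⧸ LinearMap.range (extPowerMap k φ), f ^ k • y = 0 := by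
  classical
  -- every element of the module is hit by φ after scaling by f
  have hsec : ∀ v : Fin m → R, ∃ w, φ w = f • v := by
    intro v
    have h0 : f • (Submodule.Quotient.mk v :
        (Fin m → R) ⧸ LinearMap.range φ) = 0 := hcoker _
    rw [← Submodule.Quotient.mk_smul, Submodule.Quotient.mk_eq_zero] at h0
    exact h0
  -- key: f^k • x is in the range of extPowerMap k φ for all x
  have key : ∀ x : ⋀[R]^k (Fin m → R), f ^ k • x ∈ LinearMap.range (extPowerMap k φ) := by
    intro x
    -- the submodule of ambient elements z with: ∀ membership proofs, f^k • ⟨z,_⟩ ∈ range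
    set S : Submodule R (⋀[R]^k (Fin m → R)) := LinearMap.range (extPowerMap k φ) with hS
    set T : Submodule R (ExteriorAlgebra R (Fin m → R)) :=
      Submodule.map (⋀[R]^k (Fin m → R)).subtype
        (Submodule.comap ((f ^ k) • (LinearMap.id : (⋀[R]^k (Fin m → R)) →ₗ[R] _)) S) with hT
    have hspan : (⋀[R]^k (Fin m → R) : Submodule R _) ≤ T := by
      rw [← ExteriorAlgebra.ιMulti_span_fixedDegree]
      rw [Submodule.span_le]
      rintro _ ⟨v, rfl⟩
      choose w hw using fun i => hsec (v i)
      have hmemw : ExteriorAlgebra.ιMulti R k w ∈ ⋀[R]^k (Fin m → R) :=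
        ExteriorAlgebra.ιMulti_range R k ⟨w, rfl⟩
      have hmemv : ExteriorAlgebra.ιMulti R k v ∈ ⋀[R]^k (Fin m → R) :=
        ExteriorAlgebra.ιMulti_range R k ⟨v, rfl⟩
      refine ⟨⟨ExteriorAlgebra.ιMulti R k v, hmemv⟩, ?_, rfl⟩
      refine ⟨⟨ExteriorAlgebra.ιMulti R k w, hmemw⟩, ?_⟩
      apply Subtype.ext
      have h1 : ((extPowerMap k φ ⟨ExteriorAlgebra.ιMulti R k w, hmemw⟩ :
          ⋀[R]^k (Fin m → R)) : ExteriorAlgebra R (Fin m → R)) =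
          ExteriorAlgebra.map φ (ExteriorAlgebra.ιMulti R k w) := rfl
      rw [h1, ExteriorAlgebra.map_apply_ιMulti]
      have h2 : (φ ∘ w : Fin k → Fin m → R) = fun i => f • v i := by
        funext i; exact hw i
      rw [h2]
      have h3 : (ExteriorAlgebra.ιMulti R k).toMultilinearMap (fun i => f • v i) =
          (∏ _i : Fin k, f) • (ExteriorAlgebra.ιMulti R k).toMultilinearMap v :=
        MultilinearMap.map_smul_univ _ (fun _ => f) v
      simp only [AlternatingMap.coe_multilinearMap] at h3
      rw [h3, Finset.prod_const, Finset.card_univ, Fintype.card_fin]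
      rfl
    obtain ⟨x', hx', hxx⟩ := hspan x.2
    have : x' = x := Subtype.ext hxx
    subst this
    exact hx'
  intro y
  obtain ⟨x, rfl⟩ := Submodule.Quotient.mk_surjective _ y
  rw [← Submodule.Quotient.mk_smul, Submodule.Quotient.mk_eq_zero]
  exact key x
end
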